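/- Let w, u' ∈ {±1}^n and define w' = (t/n)·w·diag(u')·diag(J_{n/t},…,J_{n/t})·diag(u'). Then ‖w − w'‖₂² = n − (t/n)·(w ⊕ u')·diag(J_{n/t},…,J_{n/t})·(w ⊕ u')ᵀ. -/

import Mathlib

open Finset Matrix

lemma block_count (t m : ℕ) (hm : 0 < m) (b : ℕ) (hb : b < t) :
    ∑ j : Fin (t * m), (if (j : ℕ) / m = b then (1 : ℝ) else 0) = m := by
  rw [Fin.sum_univ_eq_sum_range (fun j => if j / m = b then (1:ℝ) else 0), Finset.sum_boole]
  have : (Finset.range (t*m)).filter (fun j => j / m = b) = Finset.Ico (b*m) (b*m+m) := by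
    ext j
    simp only [Finset.mem_filter, Finset.mem_range, Finset.mem_Ico]
    constructor
    · rintro ⟨hj, rfl⟩
      have h3 : j < m * (j/m) + m := by
        conv_lhs => rw [← Nat.div_add_mod j m]
        exact Nat.add_lt_add_left (Nat.mod_lt j hm) _
      exact ⟨Nat.div_mul_le_self j m, by rwa [mul_comm] at h3⟩
    · rintro ⟨h1, h2⟩
      have hd : j / m = b := Nat.div_eq_of_lt_le h1 (by rw [add_mul, one_mul]; exact h2)
      have hle : (b+1) * m ≤ t * m := Nat.mul_le_mul_right m (by omega)
      have hlt : j < t * m := lt_of_lt_of_le (by rw [add_mul, one_mul]; exact h2) hle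
      exact ⟨hlt, hd⟩
  rw [this]
  simp

/-- Let w, u' ∈ {±1}^n and define
w' = (t/n)·w·diag(u')·diag(J_{n/t},…,J_{n/t})·diag(u'). Then
‖w − w'‖₂² = n − (t/n)·(w ⊕ u')·diag(J_{n/t},…,J_{n/t})·(w ⊕ u')ᵀ,
where w ⊕ u' is the componentwise real product of w and u'. -/
theorem stmt4 (t m : ℕ) (ht : 0 < t) (hm : 0 < m)
    (w u' : Fin (t * m) → ℝ)
    (hw : ∀ j, w j = 1 ∨ w j = -1) (hu' : ∀ j, u' j = 1 ∨ u' j = -1)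
    (B : Matrix (Fin (t * m)) (Fin (t * m)) ℝ)
    (hB : ∀ j k, B j k = if (j : ℕ) / m = (k : ℕ) / m then 1 else 0)
    (w' : Fin (t * m) → ℝ)
    (hw' : w' = ((t : ℝ) / ((t * m : ℕ) : ℝ)) •
      Matrix.vecMul (Matrix.vecMul (Matrix.vecMul w (Matrix.diagonal u')) B)
        (Matrix.diagonal u')) :
    ∑ j, (w j - w' j) ^ 2 =
      ((t * m : ℕ) : ℝ) - ((t : ℝ) / ((t * m : ℕ) : ℝ)) *
        dotProduct (Matrix.vecMul (fun j => w j * u' j) B)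
          (fun j => w j * u' j) := by
  set c : ℝ := (t : ℝ) / ((t * m : ℕ) : ℝ) with hc
  set v : Fin (t * m) → ℝ := fun j => w j * u' j with hv
  set x : Fin (t * m) → ℝ := Matrix.vecMul v B with hx
  have hexp : ∀ j, x j = ∑ i, v i * B i j := fun j => rfl
  have hdot : dotProduct x v = ∑ j, x j * v j := rfl
  -- x is constant on blocks
  have hxconst : ∀ j k : Fin (t * m), (j : ℕ) / m = (k : ℕ) / m → x j = x k := by
    intro j k h
    rw [hexp, hexp]
    exact Finset.sum_congr rfl (fun i _ => by rw [hB, hB, h])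
  have hBx : ∀ k, (∑ j, B k j * x j) = (m : ℝ) * x k := by
    intro k
    have hb : (k : ℕ) / m < t := (Nat.div_lt_iff_lt_mul hm).mpr k.isLt
    have h1 : ∀ j, B k j * x j =
        (if (j : ℕ) / m = (k : ℕ) / m then (1 : ℝ) else 0) * x k := by
      intro j
      rw [hB]
      by_cases h : (k : ℕ) / m = (j : ℕ) / m
      · rw [if_pos h, if_pos h.symm, hxconst j k h.symm]
      · rw [if_neg h, if_neg (fun hh => h hh.symm)]; ring
    rw [Finset.sum_congr rfl (fun j _ => h1 j), ← Finset.sum_mul,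
      block_count t m hm _ hb, mul_comm]
  have hkey : (∑ j, x j * x j) = (m : ℝ) * ∑ j, x j * v j := by
    calc (∑ j, x j * x j) = ∑ j, ∑ i, v i * (B i j * x j) := by
          refine Finset.sum_congr rfl (fun j _ => ?_)
          calc x j * x j = (∑ i, v i * B i j) * x j := by rw [← hexp j]
            _ = ∑ i, v i * (B i j * x j) := by
                rw [Finset.sum_mul]
                exact Finset.sum_congr rfl (fun i _ => mul_assoc _ _ _)
      _ = ∑ i, ∑ j, v i * (B i j * x j) := Finset.sum_comm
      _ = ∑ i, v i * ((m : ℝ) * x i) := by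
          refine Finset.sum_congr rfl (fun i _ => ?_)
          rw [← Finset.mul_sum, hBx i]
      _ = (m : ℝ) * ∑ j, x j * v j := by
          rw [Finset.mul_sum]
          exact Finset.sum_congr rfl (fun i _ => by ring)
  have hcm : c * (m : ℝ) = 1 := by
    rw [hc]
    have h1 : ((t * m : ℕ) : ℝ) = (t : ℝ) * m := by push_cast; ring
    rw [h1]
    field_simp
  have hw'j : ∀ j, w' j = c * (x j * u' j) := by
    intro j
    have hWD : Matrix.vecMul w (Matrix.diagonal u') = v := by
      ext i; rw [Matrix.vecMul_diagonal]
    rw [hw', hWD]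
    simp only [Pi.smul_apply, smul_eq_mul]
    rw [Matrix.vecMul_diagonal]
  have hsum1 : ∀ j : Fin (t * m), (w j - w' j) ^ 2 =
      1 - 2 * c * (x j * v j) + c ^ 2 * (x j * x j) := by
    intro j
    have h1 : w j ^ 2 = 1 := by rcases hw j with h | h <;> rw [h] <;> norm_num
    have h2 : u' j ^ 2 = 1 := by rcases hu' j with h | h <;> rw [h] <;> norm_num
    have h3 : v j = w j * u' j := rfl
    rw [hw'j j, h3]
    have h4 : (w j - c * (x j * u' j)) ^ 2 =
        w j ^ 2 - 2 * c * (x j * (w j * u' j)) + c ^ 2 * (x j * x j) * u' j ^ 2 := by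
      ring
    rw [h4, h1, h2]
    ring
  calc ∑ j, (w j - w' j) ^ 2
      = ∑ j : Fin (t * m), (1 - 2 * c * (x j * v j) + c ^ 2 * (x j * x j)) :=
        Finset.sum_congr rfl (fun j _ => hsum1 j)
    _ = ((t * m : ℕ) : ℝ) - 2 * c * (∑ j, x j * v j) + c ^ 2 * (∑ j, x j * x j) := by
        rw [Finset.sum_add_distrib, Finset.sum_sub_distrib, ← Finset.mul_sum,
          ← Finset.mul_sum]
        simp
    _ = ((t * m : ℕ) : ℝ) - c * dotProduct x v := by
        rw [hkey, hdot]
        have : c ^ 2 * ((m : ℝ) * ∑ j, x j * v j) = c * (c * m) * ∑ j, x j * v j := by ring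
        rw [this, hcm]
        ring
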